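/- Let p be an odd prime, ℂ_p the completion of an algebraic closure of ℚ_p, and O its ring of integers. Let Ẽ⁺ = lim_{x↦x^p} O be the tilt: the set of sequences (x^{(n)})_{n≥0} with x^{(n)} ∈ O and (x^{(n+1)})^p = x^{(n)}, which is a perfect ring of characteristic p under coordinatewise multiplication and the addition (x + y)^{(n)} = lim_{m→∞} (x^{(n+m)} + y^{(n+m)})^{p^m}. Let W(Ẽ⁺) be the ring of p-typical Witt vectors of Ẽ⁺ and θ : W(Ẽ⁺) → O Fontaine's ring homomorphism, given by θ(Σ_{k≥0} p^k[z_k]) = Σ_{k≥0} p^k z_k^{(0)}, where [·] denotes the Teichmüller lift. Choose ε ∈ Ẽ⁺ with ε^{(0)} = 1 and ε^{(1)} ≠ 1 (a compatible system of primitive p-power roots of unity), and let ε^{1/p} ∈ Ẽ⁺ be defined by (ε^{1/p})^{(n)} = ε^{(n+1)}. Then ker(θ) is a principal ideal of W(Ẽ⁺), generated by ω = ([ε] − 1)/([ε^{1/p}] − 1) = Σ_{i=0}^{p−1} [ε^{1/p}]^i. -/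

import Mathlib

open Filter

/-- The ring of integers `O = {x : ‖x‖ ≤ 1}` of a nonarchimedean normed field. -/
def integerRing (K : Type*) [NormedField K] [IsUltrametricDist K] : Subring K where
  carrier := {x | ‖x‖ ≤ 1}
  one_mem' := by simp
  mul_mem' := fun {a b} ha hb => by
    simpa [norm_mul] using mul_le_one₀ ha (norm_nonneg b) hb
  zero_mem' := by simp
  add_mem' := fun {a b} ha hb =>
    le_trans (IsUltrametricDist.norm_add_le_max a b) (max_le ha hb)
  neg_mem' := fun {a} ha => by simpa using ha

/-- The tilt `Ẽ⁺ = lim_{x ↦ x^p} O`: sequences `(x^{(n)})` in `O` with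
`(x^{(n+1)})^p = x^{(n)}`. -/
def TiltSeq (p : ℕ) (K : Type*) [NormedField K] [IsUltrametricDist K] : Type _ :=
  {f : ℕ → integerRing K // ∀ n, (f (n + 1)) ^ p = f n}

/-- The element `ε^{1/p}` obtained from `ε` by shifting the defining sequence. -/
def tiltShift (p : ℕ) (K : Type*) [NormedField K] [IsUltrametricDist K]
    (ε : TiltSeq p K) : TiltSeq p K :=
  ⟨fun n => ε.1 (n + 1), fun n => ε.2 (n + 1)⟩

set_option linter.unusedSectionVars false
set_option maxHeartbeats 1000000
set_option linter.unusedVariables false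

namespace FontaineAux

section Witt

variable {p : ℕ} [Fact p.Prime] {S : Type*} [CommRing S]

theorem coeff_zero_ringHom_eq (x : WittVector p S) :
    WittVector.ghostComponent 0 x = x.coeff 0 := by
  rw [WittVector.ghostComponent_apply, wittPolynomial_zero, MvPolynomial.aeval_X]

theorem coeff_init (n : ℕ) (x : WittVector p S) (i : ℕ) :
    (WittVector.init n x).coeff i = if i < n then x.coeff i else 0 := by
  simp [WittVector.init, WittVector.select, WittVector.coeff_mk]

theorem init_eq_zero_of_coeff {n : ℕ} {y : WittVector p S} (hy : ∀ j < n, y.coeff j = 0) :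
    WittVector.init n y = 0 := by
  ext j
  rw [coeff_init]
  split_ifs with h
  · simpa using hy j h
  · simp

theorem coeff_add_of_high (x y : WittVector p S) {n i : ℕ} (hi : i < n)
    (hy : ∀ j < n, y.coeff j = 0) : (x + y).coeff i = x.coeff i := by
  have h1 : WittVector.init n (x + y) = WittVector.init n x := by
    rw [WittVector.init_add, init_eq_zero_of_coeff hy, add_zero, WittVector.init_init]
  have h2 := coeff_init n (x + y) i
  rw [if_pos hi] at h2
  rw [← h2, h1, coeff_init, if_pos hi]

theorem coeff_sub_of_agree (x y : WittVector p S) {n : ℕ}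
    (h : ∀ j < n, x.coeff j = y.coeff j) : ∀ i < n, (x - y).coeff i = 0 := by
  intro i hi
  have h1 : WittVector.init n x = WittVector.init n y := by
    ext j
    rw [coeff_init, coeff_init]
    split_ifs with hc
    · exact h _ hc
    · rfl
  have h2 : WittVector.init n (x - y) = 0 := by
    rw [WittVector.init_sub, h1, sub_self]
    exact init_eq_zero_of_coeff (by simp)
  have h3 := coeff_init n (x - y) i
  rw [if_pos hi] at h3
  rw [← h3, h2]
  simp

theorem iterate_verschiebung_coeff_lt (z : WittVector p S) :
    ∀ (n : ℕ) (i : ℕ), i < n → (WittVector.verschiebung^[n] z).coeff i = 0 := by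
  intro n
  induction n with
  | zero => omega
  | succ n ih =>
    intro i hi
    rw [Function.iterate_succ_apply']
    match i with
    | 0 => exact WittVector.verschiebung_coeff_zero _
    | (j+1) =>
      rw [WittVector.verschiebung_coeff_succ]
      exact ih j (by omega)

theorem exists_iterate_verschiebung {n : ℕ} {x : WittVector p S}
    (h : ∀ i < n, x.coeff i = 0) : ∃ z, WittVector.verschiebung^[n] z = x := by
  induction n generalizing x with
  | zero => exact ⟨x, rfl⟩
  | succ n ih =>
    set y : WittVector p S := WittVector.mk p (fun i => x.coeff (i + 1)) with hy
    have hxy : WittVector.verschiebung y = x := by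
      ext i
      match i with
      | 0 =>
        rw [WittVector.verschiebung_coeff_zero]
        exact (h 0 (by omega)).symm
      | (j+1) =>
        rw [WittVector.verschiebung_coeff_succ, hy, WittVector.coeff_mk]
    have hy' : ∀ i < n, y.coeff i = 0 := by
      intro i hi
      rw [hy, WittVector.coeff_mk]
      exact h (i+1) (by omega)
    obtain ⟨z, hz⟩ := ih hy'
    exact ⟨z, by rw [Function.iterate_succ_apply', hz, hxy]⟩

variable [CharP S p]

theorem iterate_verschiebung_iterate_frobenius (n : ℕ) (z : WittVector p S) :
    WittVector.verschiebung^[n] (WittVector.frobenius^[n] z) = z * (p : WittVector p S) ^ n := by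
  induction n generalizing z with
  | zero => simp
  | succ n ih =>
    have hF : (⇑(WittVector.frobenius (p := p) (R := S)))^[n+1] z
        = (⇑WittVector.frobenius)^[n] (WittVector.frobenius z) :=
      Function.iterate_succ_apply _ _ _
    rw [Function.iterate_succ_apply', hF, ih (WittVector.frobenius z)]
    have hp' : (p : WittVector p S) ^ n = WittVector.frobenius ((p : WittVector p S) ^ n) := by
      rw [map_pow, map_natCast]
    rw [hp', ← map_mul, WittVector.verschiebung_frobenius, pow_succ, ← mul_assoc]

theorem coeff_eq_zero_iff_dvd [PerfectRing S p] (n : ℕ) (x : WittVector p S) :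
    (∀ i < n, x.coeff i = 0) ↔ ∃ z, x = z * (p : WittVector p S) ^ n := by
  constructor
  · intro h
    obtain ⟨w, hw⟩ := exists_iterate_verschiebung h
    obtain ⟨z, hz⟩ := (WittVector.frobenius_bijective p S).2.iterate n w
    exact ⟨z, by rw [← hw, ← hz, iterate_verschiebung_iterate_frobenius]⟩
  · rintro ⟨z, rfl⟩ i hi
    rw [← iterate_verschiebung_iterate_frobenius]
    exact iterate_verschiebung_coeff_lt _ _ _ hi


end Witt

section Tilt

variable {p : ℕ} [hp : Fact p.Prime] {K : Type*} [NormedField K] [IsUltrametricDist K]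

theorem tilt_ext {x y : TiltSeq p K} (h : ∀ n, (x.1 n : K) = (y.1 n : K)) : x = y :=
  Subtype.ext (funext fun n => Subtype.ext (h n))

theorem tilt_compat (x : TiltSeq p K) (n m : ℕ) :
    ((x.1 (n + m) : K)) ^ (p ^ m) = (x.1 n : K) := by
  induction m with
  | zero => simp
  | succ m ih =>
    have h := congrArg (fun v : integerRing K => (v : K)) (x.2 (n + m))
    simp only [SubmonoidClass.coe_pow] at h
    calc ((x.1 (n + (m+1)) : K)) ^ p ^ (m+1)
        = (((x.1 (n + m + 1) : K)) ^ p) ^ p ^ m := by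
          rw [← pow_mul, ← pow_succ']
          norm_num [Nat.add_assoc]
      _ = (x.1 n : K) := by rw [h]; exact ih

theorem tilt_coord_zero (x : TiltSeq p K) (h : (x.1 0 : K) = 0) (n : ℕ) : (x.1 n : K) = 0 := by
  have h2 : ((x.1 (0 + n) : K)) ^ (p ^ n) = 0 := by rw [tilt_compat x 0 n, h]
  rw [Nat.zero_add] at h2
  exact pow_eq_zero_iff (pow_ne_zero n hp.out.ne_zero) |>.mp h2


section Ring

set_option linter.unusedSectionVars false

variable [instT : CommRing (TiltSeq p K)]

theorem tilt_pow_coe (hone : ∀ n, ((1 : TiltSeq p K).1 n : K) = 1)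
    (hmul : ∀ (x y : TiltSeq p K) (n : ℕ), ((x * y).1 n : K) = (x.1 n : K) * (y.1 n : K))
    (x : TiltSeq p K) (j n : ℕ) : ((x ^ j).1 n : K) = (x.1 n : K) ^ j := by
  induction j with
  | zero => rw [pow_zero, pow_zero, hone]
  | succ j ih => rw [pow_succ, pow_succ, hmul, ih]

theorem tilt_eq_zero (hzero : ∀ n, ((0 : TiltSeq p K).1 n : K) = 0)
    {x : TiltSeq p K} (h : (x.1 0 : K) = 0) : x = 0 :=
  tilt_ext fun n => by rw [tilt_coord_zero x h n, hzero]

theorem tilt_coord_ne_zero (hzero : ∀ n, ((0 : TiltSeq p K).1 n : K) = 0)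
    {x : TiltSeq p K} (h : x ≠ 0) (n : ℕ) : (x.1 n : K) ≠ 0 := by
  intro hc
  apply h
  apply tilt_eq_zero hzero
  have : ((x.1 (0 + n) : K)) ^ (p ^ n) = (x.1 0 : K) := tilt_compat x 0 n
  rw [Nat.zero_add, hc] at this
  rw [← this, zero_pow (pow_ne_zero n hp.out.ne_zero)]

theorem tilt_noZeroDivisors (hzero : ∀ n, ((0 : TiltSeq p K).1 n : K) = 0)
    (hmul : ∀ (x y : TiltSeq p K) (n : ℕ), ((x * y).1 n : K) = (x.1 n : K) * (y.1 n : K)) :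
    NoZeroDivisors (TiltSeq p K) := by
  constructor
  intro x y hxy
  by_contra hc
  push_neg at hc
  have h0 : ((x * y).1 0 : K) = 0 := by rw [hxy, hzero]
  rw [hmul] at h0
  rcases mul_eq_zero.mp h0 with h | h
  · exact tilt_coord_ne_zero hzero hc.1 0 h
  · exact tilt_coord_ne_zero hzero hc.2 0 h

/-- Division in the tilt: if `‖a⁰‖ ≤ ‖w⁰‖` and `w ≠ 0` then `w ∣ a`. -/
theorem tilt_dvd (hzero : ∀ n, ((0 : TiltSeq p K).1 n : K) = 0)
    (hmul : ∀ (x y : TiltSeq p K) (n : ℕ), ((x * y).1 n : K) = (x.1 n : K) * (y.1 n : K))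
    (a w : TiltSeq p K) (hw : w ≠ 0) (h : ‖(a.1 0 : K)‖ ≤ ‖(w.1 0 : K)‖) :
    ∃ u : TiltSeq p K, w * u = a := by
  have hwn : ∀ n, (w.1 n : K) ≠ 0 := tilt_coord_ne_zero hzero hw
  have hnorm : ∀ n, ‖(a.1 n : K)‖ ≤ ‖(w.1 n : K)‖ := by
    intro n
    have ha : ‖(a.1 n : K)‖ ^ (p ^ n) = ‖(a.1 0 : K)‖ := by
      rw [← norm_pow]
      exact congrArg _ (by rw [← tilt_compat a 0 n, Nat.zero_add])
    have hw' : ‖(w.1 n : K)‖ ^ (p ^ n) = ‖(w.1 0 : K)‖ := by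
      rw [← norm_pow]
      exact congrArg _ (by rw [← tilt_compat w 0 n, Nat.zero_add])
    have : ‖(a.1 n : K)‖ ^ (p ^ n) ≤ ‖(w.1 n : K)‖ ^ (p ^ n) := by rw [ha, hw']; exact h
    exact le_of_pow_le_pow_left₀ (pow_ne_zero n hp.out.ne_zero) (norm_nonneg _) this
  refine ⟨⟨fun n => ⟨(a.1 n : K) / (w.1 n : K), ?_⟩, ?_⟩, ?_⟩
  · show ‖(a.1 n : K) / (w.1 n : K)‖ ≤ 1
    rw [norm_div]
    exact div_le_one_of_le₀ (hnorm n) (norm_nonneg _)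
  · intro n
    apply Subtype.ext
    show ((a.1 (n+1) : K) / (w.1 (n+1) : K)) ^ p = (a.1 n : K) / (w.1 n : K)
    have ha := congrArg (fun v : integerRing K => (v : K)) (a.2 n)
    have hw2 := congrArg (fun v : integerRing K => (v : K)) (w.2 n)
    simp only [SubmonoidClass.coe_pow] at ha hw2
    rw [div_pow, ha, hw2]
  · apply tilt_ext
    intro n
    exact (hmul _ _ n).trans (mul_div_cancel₀ _ (hwn n))

end Ring


section Topology

set_option linter.unusedSectionVars false

variable [instT : CommRing (TiltSeq p K)]

theorem tilt_addK
    (hadd : ∀ (x y : TiltSeq p K) (n : ℕ),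
      Tendsto (fun m : ℕ => ((x.1 (n + m) + y.1 (n + m)) ^ p ^ m : integerRing K))
        atTop (nhds ((x + y).1 n)))
    (x y : TiltSeq p K) (n : ℕ) :
    Tendsto (fun m : ℕ => ((x.1 (n + m) : K) + (y.1 (n + m) : K)) ^ p ^ m)
      atTop (nhds ((x + y).1 n : K)) := by
  have h := (continuous_subtype_val.tendsto _).comp (hadd x y n)
  have he : ∀ m : ℕ, (((x.1 (n + m) + y.1 (n + m)) ^ p ^ m : integerRing K) : K)
      = ((x.1 (n + m) : K) + (y.1 (n + m) : K)) ^ p ^ m := by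
    intro m
    push_cast
    ring
  exact h.congr' (Filter.Eventually.of_forall fun m => he m)

theorem tilt_neg_coe (hodd : Odd p)
    (hzero : ∀ n, ((0 : TiltSeq p K).1 n : K) = 0)
    (hone : ∀ n, ((1 : TiltSeq p K).1 n : K) = 1)
    (hmul : ∀ (x y : TiltSeq p K) (n : ℕ), ((x * y).1 n : K) = (x.1 n : K) * (y.1 n : K))
    (hadd : ∀ (x y : TiltSeq p K) (n : ℕ),
      Tendsto (fun m : ℕ => ((x.1 (n + m) + y.1 (n + m)) ^ p ^ m : integerRing K))
        atTop (nhds ((x + y).1 n)))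
    (x : TiltSeq p K) (n : ℕ) : (((-x : TiltSeq p K).1 n : K)) = -(x.1 n : K) := by
  have hmem : (-1 : K) ∈ integerRing K := by
    show ‖(-1 : K)‖ ≤ 1
    simp
  set m1 : TiltSeq p K := ⟨fun _ => ⟨-1, hmem⟩, by
    intro k
    apply Subtype.ext
    show ((-1 : K)) ^ p = -1
    exact Odd.neg_one_pow hodd⟩ with hm1
  have hm1c : ∀ k, ((m1.1 k : K)) = -1 := fun k => rfl
  have key : (1 : TiltSeq p K) + m1 = 0 := by
    apply tilt_ext
    intro k
    have h1 := tilt_addK hadd 1 m1 k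
    have h2 : (fun m : ℕ => (((1:TiltSeq p K).1 (k + m) : K) + (m1.1 (k + m) : K)) ^ p ^ m)
        = fun _ : ℕ => (0 : K) := by
      funext m
      rw [hone, hm1c]
      simp [zero_pow (pow_ne_zero m hp.out.ne_zero)]
    rw [h2] at h1
    have h3 : (((1 : TiltSeq p K) + m1).1 k : K) = 0 :=
      tendsto_nhds_unique h1 tendsto_const_nhds
    rw [h3, hzero]
  have hneg : m1 = -1 := eq_neg_of_add_eq_zero_right key
  have : -x = m1 * x := by rw [hneg, neg_one_mul]
  rw [this, hmul, hm1c, neg_one_mul]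

variable [NormedAlgebra ℚ_[p] K]

theorem norm_p_K (hisom : ∀ x : ℚ_[p], ‖algebraMap ℚ_[p] K x‖ = ‖x‖) :
    ‖((p : ℕ) : K)‖ = (p : ℝ)⁻¹ := by
  have h : ((p : ℕ) : K) = algebraMap ℚ_[p] K ((p : ℕ) : ℚ_[p]) := by rw [map_natCast]
  rw [h, hisom]
  exact_mod_cast Padic.norm_p

theorem tilt_add_coord_near (hisom : ∀ x : ℚ_[p], ‖algebraMap ℚ_[p] K x‖ = ‖x‖)
    (hadd : ∀ (x y : TiltSeq p K) (n : ℕ),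
      Tendsto (fun m : ℕ => ((x.1 (n + m) + y.1 (n + m)) ^ p ^ m : integerRing K))
        atTop (nhds ((x + y).1 n)))
    (x y : TiltSeq p K) (n : ℕ) :
    ‖((x + y).1 n : K) - ((x.1 n : K) + (y.1 n : K))‖ ≤ (p : ℝ)⁻¹ := by
  have h1 := tilt_addK hadd x y n
  have hb : ∀ m : ℕ, ‖((x.1 (n + m) : K) + (y.1 (n + m) : K)) ^ p ^ m
      - ((x.1 n : K) + (y.1 n : K))‖ ≤ (p : ℝ)⁻¹ := by
    intro m
    obtain ⟨r, hr⟩ := exists_add_pow_prime_pow_eq hp.out (x.1 (n + m)) (y.1 (n + m)) m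
    have hrK := congrArg (fun v : integerRing K => (v : K)) hr
    push_cast at hrK
    rw [hrK, tilt_compat x n m, tilt_compat y n m]
    have : (x.1 n : K) + (y.1 n : K) + ((p:ℕ) : K) * (x.1 (n + m) : K) * (y.1 (n + m) : K) * (r : K)
        - ((x.1 n : K) + (y.1 n : K))
        = ((p:ℕ) : K) * ((x.1 (n + m) : K) * (y.1 (n + m) : K) * (r : K)) := by ring
    rw [this, norm_mul, norm_p_K hisom]
    have hr1 : ‖(x.1 (n + m) : K) * (y.1 (n + m) : K) * (r : K)‖ ≤ 1 := (x.1 (n + m) * y.1 (n + m) * r).2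
    calc (p:ℝ)⁻¹ * ‖(x.1 (n + m) : K) * (y.1 (n + m) : K) * (r : K)‖ ≤ (p:ℝ)⁻¹ * 1 := by
          apply mul_le_mul_of_nonneg_left hr1 (by positivity)
      _ = (p:ℝ)⁻¹ := mul_one _
  exact le_of_tendsto ((h1.sub_const _).norm) (Filter.Eventually.of_forall hb)

theorem tilt_natCast_near (hisom : ∀ x : ℚ_[p], ‖algebraMap ℚ_[p] K x‖ = ‖x‖)
    (hzero : ∀ n, ((0 : TiltSeq p K).1 n : K) = 0)
    (hone : ∀ n, ((1 : TiltSeq p K).1 n : K) = 1)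
    (hadd : ∀ (x y : TiltSeq p K) (n : ℕ),
      Tendsto (fun m : ℕ => ((x.1 (n + m) + y.1 (n + m)) ^ p ^ m : integerRing K))
        atTop (nhds ((x + y).1 n)))
    (k n : ℕ) : ‖(((k : ℕ) : TiltSeq p K).1 n : K) - (k : K)‖ ≤ (p : ℝ)⁻¹ := by
  induction k with
  | zero =>
    simp only [Nat.cast_zero, hzero, sub_zero, norm_zero]
    positivity
  | succ k ih =>
    have hc : ((k + 1 : ℕ) : TiltSeq p K) = ((k : ℕ) : TiltSeq p K) + 1 := by push_cast; ring
    rw [hc]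
    have h1 := tilt_add_coord_near hisom hadd ((k : ℕ) : TiltSeq p K) 1 n
    rw [hone] at h1
    have hdec : ((((k : ℕ) : TiltSeq p K) + 1).1 n : K) - ((k + 1 : ℕ) : K)
        = ((((k : ℕ) : TiltSeq p K) + 1).1 n : K) - (((((k : ℕ) : TiltSeq p K)).1 n : K) + 1)
          + (((((k : ℕ) : TiltSeq p K)).1 n : K) - (k : K)) := by push_cast; ring
    rw [hdec]
    exact le_trans (IsUltrametricDist.norm_add_le_max _ _) (max_le h1 ih)

theorem tilt_charP (hisom : ∀ x : ℚ_[p], ‖algebraMap ℚ_[p] K x‖ = ‖x‖)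
    (hzero : ∀ n, ((0 : TiltSeq p K).1 n : K) = 0)
    (hone : ∀ n, ((1 : TiltSeq p K).1 n : K) = 1)
    (hadd : ∀ (x y : TiltSeq p K) (n : ℕ),
      Tendsto (fun m : ℕ => ((x.1 (n + m) + y.1 (n + m)) ^ p ^ m : integerRing K))
        atTop (nhds ((x + y).1 n)))
    : CharP (TiltSeq p K) p := by
  haveI : Nontrivial (TiltSeq p K) := by
    refine ⟨1, 0, fun hc => ?_⟩
    have h6 := congrArg (fun z : TiltSeq p K => (z.1 0 : K)) hc
    rw [hone 0, hzero 0] at h6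
    exact one_ne_zero h6
  rw [CharP.charP_iff_prime_eq_zero hp.out]
  apply tilt_eq_zero hzero
  set v : K := (((p : ℕ) : TiltSeq p K).1 0 : K) with hv
  have hbound : ∀ n, ‖(((p : ℕ) : TiltSeq p K).1 n : K)‖ ≤ (p : ℝ)⁻¹ := by
    intro n
    have h1 := tilt_natCast_near hisom hzero hone hadd p n
    have hdc : (((p : ℕ) : TiltSeq p K).1 n : K)
        = ((((p : ℕ) : TiltSeq p K).1 n : K) - ((p:ℕ) : K)) + ((p:ℕ) : K) := by ring
    rw [hdc]
    exact le_trans (IsUltrametricDist.norm_add_le_max _ _)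
      (max_le h1 (le_of_eq (norm_p_K hisom)))
  have hpow : ∀ n : ℕ, ‖v‖ ≤ ((p : ℝ)⁻¹) ^ (p ^ n) := by
    intro n
    have h2 : ((((p : ℕ) : TiltSeq p K).1 (0 + n) : K)) ^ (p ^ n) = v :=
      tilt_compat _ 0 n
    rw [← h2, norm_pow]
    exact pow_le_pow_left₀ (norm_nonneg _) (hbound _) _
  have hlim : Tendsto (fun n : ℕ => ((p : ℝ)⁻¹) ^ (p ^ n)) atTop (nhds 0) := by
    have h3 : Tendsto (fun n : ℕ => ((p : ℝ)⁻¹) ^ n) atTop (nhds 0) := by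
      apply tendsto_pow_atTop_nhds_zero_of_lt_one (by positivity)
      rw [inv_lt_one_iff₀]
      right
      exact_mod_cast hp.out.one_lt
    exact h3.comp (tendsto_pow_atTop_atTop_of_one_lt (α := ℕ) hp.out.one_lt)
  have h4 : ‖v‖ ≤ 0 := ge_of_tendsto hlim (Filter.Eventually.of_forall hpow)
  have h5 : ‖v‖ = 0 := le_antisymm h4 (norm_nonneg _)
  exact norm_eq_zero.mp h5

end Topology


section Cyclo

open Polynomial

theorem prim_root_of_pow {ζ : K} {k : ℕ} (h1 : ζ ^ p ^ (k + 1) = 1) (h2 : ζ ^ p ^ k ≠ 1) :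
    IsPrimitiveRoot ζ (p ^ (k + 1)) := by
  refine ⟨h1, fun l hl => ?_⟩
  have hd : ζ ^ Nat.gcd l (p ^ (k + 1)) = 1 := pow_gcd_eq_one.mpr ⟨hl, h1⟩
  obtain ⟨j, hj, hdj⟩ := (Nat.dvd_prime_pow hp.out).mp (Nat.gcd_dvd_right l (p ^ (k + 1)))
  have hjk : j = k + 1 := by
    by_contra hc
    have hjle : j ≤ k := by omega
    apply h2
    calc ζ ^ p ^ k = (ζ ^ p ^ j) ^ p ^ (k - j) := by
          rw [← pow_mul, ← pow_add, Nat.add_sub_cancel' hjle]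
      _ = 1 := by rw [← hdj, hd, one_pow]
  subst hjk
  rw [← hdj]
  exact Nat.gcd_dvd_left l _

theorem cyclo_norm_bound [NormedAlgebra ℚ_[p] K]
    (hisom : ∀ x : ℚ_[p], ‖algebraMap ℚ_[p] K x‖ = ‖x‖)
    {ζ : K} (hζ1 : ‖ζ‖ ≤ 1) {k : ℕ} (hprim : IsPrimitiveRoot ζ (p ^ (k + 1))) :
    (p : ℝ)⁻¹ ≤ ‖ζ - 1‖ ^ (p ^ k * (p - 1)) := by
  haveI : NeZero (p ^ (k + 1)) := NeZero.of_pos (pow_pos hp.out.pos _)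
  have hcyc := Polynomial.cyclotomic_eq_prod_X_sub_primitiveRoots hprim
  have heval : ((p : ℕ) : K) = ∏ μ ∈ primitiveRoots (p ^ (k + 1)) K, (1 - μ) := by
    have h := Polynomial.eval_one_cyclotomic_prime_pow (R := K) (p := p) k
    rw [hcyc] at h
    rw [← h, eval_prod]
    apply Finset.prod_congr rfl
    intro μ _
    simp
  -- bound each factor
  have hfac : ∀ μ ∈ primitiveRoots (p ^ (k + 1)) K, ‖1 - μ‖ ≤ ‖ζ - 1‖ := by
    intro μ hμ
    have hμprim := (mem_primitiveRoots (pow_pos hp.out.pos (k+1))).mp hμ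
    obtain ⟨i, _, rfl⟩ := hprim.eq_pow_of_pow_eq_one hμprim.pow_eq_one
    have hgeom : 1 - ζ ^ i = -((∑ j ∈ Finset.range i, ζ ^ j) * (ζ - 1)) := by
      rw [geom_sum_mul]; ring
    rw [hgeom, norm_neg, norm_mul]
    have hsum : ‖∑ j ∈ Finset.range i, ζ ^ j‖ ≤ 1 := by
      apply IsUltrametricDist.norm_sum_le_of_forall_le_of_nonneg zero_le_one
      intro j _
      calc ‖ζ ^ j‖ = ‖ζ‖ ^ j := norm_pow _ _
        _ ≤ 1 := pow_le_one₀ (norm_nonneg _) hζ1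
    calc ‖∑ j ∈ Finset.range i, ζ ^ j‖ * ‖ζ - 1‖ ≤ 1 * ‖ζ - 1‖ :=
          mul_le_mul_of_nonneg_right hsum (norm_nonneg _)
      _ = ‖ζ - 1‖ := one_mul _
  have hnormp : ‖((p : ℕ) : K)‖ = (p : ℝ)⁻¹ := by
    have h : ((p : ℕ) : K) = algebraMap ℚ_[p] K ((p : ℕ) : ℚ_[p]) := by rw [map_natCast]
    rw [h, hisom]
    exact_mod_cast Padic.norm_p
  have hcard : (primitiveRoots (p ^ (k + 1)) K).card = p ^ k * (p - 1) := by
    rw [hprim.card_primitiveRoots, Nat.totient_prime_pow hp.out (Nat.succ_pos k)]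
    simp
  calc (p : ℝ)⁻¹ = ‖((p : ℕ) : K)‖ := hnormp.symm
    _ = ∏ μ ∈ primitiveRoots (p ^ (k + 1)) K, ‖1 - μ‖ := by rw [heval, norm_prod]
    _ ≤ ∏ _μ ∈ primitiveRoots (p ^ (k + 1)) K, ‖ζ - 1‖ :=
        Finset.prod_le_prod (fun μ _ => norm_nonneg _) hfac
    _ = ‖ζ - 1‖ ^ (p ^ k * (p - 1)) := by rw [Finset.prod_const, hcard]


end Cyclo

end Tilt

end FontaineAux

/-- Let `p` be an odd prime and `K = ℂ_p` (an algebraically closed,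
complete, nonarchimedean normed field, isometrically extending `ℚ_p`, in which the
elements algebraic over `ℚ_p` are dense), with ring of integers `O`.  Let `Ẽ⁺` be the
tilt of `O`, a ring under coordinatewise multiplication and the addition
`(x + y)^{(n)} = lim_m (x^{(n+m)} + y^{(n+m)})^{p^m}`, and let
`θ : W(Ẽ⁺) → O` be Fontaine's ring homomorphism, determined by
`θ([z]) = z^{(0)}` on Teichmüller representatives.  If `ε ∈ Ẽ⁺` satisfies `ε^{(0)} = 1`
and `ε^{(1)} ≠ 1`, then `ker θ` is a principal ideal generated by
`ω = ([ε] − 1)/([ε^{1/p}] − 1) = Σ_{i=0}^{p−1} [ε^{1/p}]^i`. -/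
theorem fontaine_theta_kernel_principal
    (p : ℕ) [Fact p.Prime] (hodd : Odd p)
    (K : Type*) [NormedField K] [CompleteSpace K] [IsAlgClosed K]
    [IsUltrametricDist K] [NormedAlgebra ℚ_[p] K]
    (hisom : ∀ x : ℚ_[p], ‖algebraMap ℚ_[p] K x‖ = ‖x‖)
    (hdense : Dense {x : K | IsAlgebraic ℚ_[p] x})
    [instT : CommRing (TiltSeq p K)]
    -- the ring structure on the tilt is coordinatewise multiplication ...
    (hone : ∀ n, ((1 : TiltSeq p K).1 n : K) = 1)
    (hzero : ∀ n, ((0 : TiltSeq p K).1 n : K) = 0)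
    (hmul : ∀ (x y : TiltSeq p K) (n : ℕ), ((x * y).1 n : K) = (x.1 n : K) * (y.1 n : K))
    -- ... and the addition `(x + y)^{(n)} = lim_m (x^{(n+m)} + y^{(n+m)})^{p^m}`
    (hadd : ∀ (x y : TiltSeq p K) (n : ℕ),
      Tendsto (fun m : ℕ => ((x.1 (n + m) + y.1 (n + m)) ^ p ^ m : integerRing K))
        atTop (nhds ((x + y).1 n)))
    -- Fontaine's homomorphism `θ`, determined by `θ([z]) = z^{(0)}`
    (θ : WittVector p (TiltSeq p K) →+* integerRing K)
    (hθ : ∀ z : TiltSeq p K, θ (WittVector.teichmuller p z) = z.1 0)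
    -- a compatible system `ε` of primitive `p`-power roots of unity
    (ε : TiltSeq p K) (hε0 : (ε.1 0 : K) = 1) (hε1 : (ε.1 1 : K) ≠ 1)
    -- `ω = Σ_{i=0}^{p−1} [ε^{1/p}]^i`
    (ω : WittVector p (TiltSeq p K))
    (hω : ω = ∑ i ∈ Finset.range p, (WittVector.teichmuller p (tiltShift p K ε)) ^ i) :
    (WittVector.teichmuller p (tiltShift p K ε) - 1) * ω =
        WittVector.teichmuller p ε - 1 ∧
      RingHom.ker θ = Ideal.span {ω} := by
  classical
  haveI hp : Fact p.Prime := inferInstance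
  have hppos : (0:ℝ) < (p:ℝ)⁻¹ := by
    have h0 : (0:ℝ) < p := by exact_mod_cast hp.out.pos
    positivity
  set t := tiltShift p K ε with ht
  -- coercion of the compatibility condition
  have hcomp : ∀ (x : TiltSeq p K) (n : ℕ), ((x.1 (n+1) : K)) ^ p = (x.1 n : K) := by
    intro x n
    have h := congrArg (fun v : integerRing K => (v : K)) (x.2 n)
    simpa using h
  have hshift : ∀ x : TiltSeq p K, (tiltShift p K x) ^ p = x := by
    intro x
    apply FontaineAux.tilt_ext
    intro n
    rw [FontaineAux.tilt_pow_coe hone hmul]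
    exact hcomp x n
  -- instances
  haveI instC : CharP (TiltSeq p K) p := FontaineAux.tilt_charP hisom hzero hone hadd
  haveI instN : Nontrivial (TiltSeq p K) := by
    refine ⟨1, 0, fun hc => ?_⟩
    have h6 := congrArg (fun z : TiltSeq p K => (z.1 0 : K)) hc
    rw [hone 0, hzero 0] at h6
    exact one_ne_zero h6
  haveI instZ : NoZeroDivisors (TiltSeq p K) := FontaineAux.tilt_noZeroDivisors hzero hmul
  haveI instD : IsDomain (TiltSeq p K) := NoZeroDivisors.to_isDomain _
  haveI instE : ExpChar (TiltSeq p K) p := ExpChar.prime Fact.out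
  haveI instP : PerfectRing (TiltSeq p K) p := by
    apply PerfectRing.ofSurjective
    intro x
    exact ⟨tiltShift p K x, by rw [frobenius_def]; exact hshift x⟩
  -- Part 1
  have htpow : (WittVector.teichmuller p t) ^ p = WittVector.teichmuller p ε := by
    rw [← map_pow, ht, hshift]
  have part1 : (WittVector.teichmuller p t - 1) * ω = WittVector.teichmuller p ε - 1 := by
    rw [hω, mul_geom_sum, htpow]
  refine ⟨part1, ?_⟩
  -- θ ω = 0
  have hζp : ((ε.1 1 : K)) ^ p = 1 := by rw [hcomp ε 0, hε0]
  have hsumzero : (∑ i ∈ Finset.range p, ((ε.1 1 : K)) ^ i) = 0 := by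
    have h := mul_geom_sum ((ε.1 1 : K)) p
    rw [hζp, sub_self] at h
    rcases mul_eq_zero.mp h with h' | h'
    · exact absurd (sub_eq_zero.mp h') hε1
    · exact h'
  have hθω : θ ω = 0 := by
    apply Subtype.ext
    show ((θ ω : integerRing K) : K) = ((0 : integerRing K) : K)
    rw [ZeroMemClass.coe_zero, hω, map_sum]
    have he : ∀ i, θ ((WittVector.teichmuller p t) ^ i) = (t.1 0) ^ i := by
      intro i; rw [map_pow, hθ]
    have hc : ((∑ i ∈ Finset.range p, θ ((WittVector.teichmuller p t) ^ i) : integerRing K) : K)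
        = ∑ i ∈ Finset.range p, ((t.1 0 : K)) ^ i := by
      simp only [he]
      push_cast
      rfl
    rw [hc]
    exact hsumzero
  -- ghost component 0 facts
  have hsub0 : ∀ x y : WittVector p (TiltSeq p K), (x - y).coeff 0 = x.coeff 0 - y.coeff 0 := by
    intro x y
    rw [← FontaineAux.coeff_zero_ringHom_eq, map_sub,
      FontaineAux.coeff_zero_ringHom_eq, FontaineAux.coeff_zero_ringHom_eq]
  have hd0 : ∀ x : WittVector p (TiltSeq p K), x.coeff 0 = 0 →
      ∃ z, x = z * (p : WittVector p (TiltSeq p K)) := by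
    intro x hx
    obtain ⟨z, hz⟩ := (FontaineAux.coeff_eq_zero_iff_dvd 1 x).mp (by
      intro i hi
      interval_cases i
      exact hx)
    exact ⟨z, by simpa using hz⟩
  -- ω mod p = (t-1)^(p-1)
  have ht1 : t ≠ (1 : TiltSeq p K) := by
    intro h
    apply hε1
    have h6 : (t.1 0 : K) = ((1 : TiltSeq p K).1 0 : K) :=
      congrArg (fun z : TiltSeq p K => (z.1 0 : K)) h
    rw [hone 0] at h6
    exact h6
  have hgeo : (∑ i ∈ Finset.range p, t ^ i) = (t - 1) ^ (p - 1) := by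
    have hcancel : (t - 1) * (∑ i ∈ Finset.range p, t ^ i) = (t - 1) * (t - 1) ^ (p - 1) := by
      have h1 : (t - 1) * (t - 1) ^ (p - 1) = (t - 1) ^ p := by
        rw [← pow_succ']
        congr 1
        exact Nat.succ_pred_eq_of_pos hp.out.pos
      have hfrob : (t - 1 : TiltSeq p K) ^ p = t ^ p - 1 := by
        calc (t - 1 : TiltSeq p K) ^ p = (t + (-1)) ^ p := by rw [sub_eq_add_neg]
          _ = t ^ p + (-1) ^ p := add_pow_char ..
          _ = t ^ p - 1 := by rw [Odd.neg_one_pow hodd, ← sub_eq_add_neg]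
      rw [mul_geom_sum, h1, hfrob]
    exact mul_left_cancel₀ (sub_ne_zero.mpr ht1) hcancel
  have hω0 : ω.coeff 0 = (t - 1) ^ (p - 1) := by
    rw [← FontaineAux.coeff_zero_ringHom_eq, hω, map_sum]
    have he : ∀ i, WittVector.ghostComponent 0 ((WittVector.teichmuller p t) ^ i) = t ^ i := by
      intro i
      rw [map_pow, FontaineAux.coeff_zero_ringHom_eq, WittVector.teichmuller_coeff_zero]
    simp only [he]
    exact hgeo
  -- norm lower bound for (t-1)^{(0)}
  have hϖnorm : (p : ℝ)⁻¹ ≤ ‖(((t - 1 : TiltSeq p K).1 0 : K))‖ ^ (p - 1) := by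
    have hneg1 : ∀ k, (((-1 : TiltSeq p K).1 k : K)) = -1 := by
      intro k
      have := FontaineAux.tilt_neg_coe hodd hzero hone hmul hadd (1 : TiltSeq p K) k
      rw [hone] at this
      exact this
    have hlim := FontaineAux.tilt_addK hadd t (-1) 0
    simp only [Nat.zero_add] at hlim
    have hfun : (fun m : ℕ => ((t.1 m : K) + (((-1 : TiltSeq p K).1 m : K))) ^ p ^ m)
        = fun m : ℕ => ((ε.1 (m+1) : K) - 1) ^ p ^ m := by
      funext m
      rw [hneg1 m, ← sub_eq_add_neg]
      rfl
    rw [hfun] at hlim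
    have hlim2 : Tendsto (fun m : ℕ => ‖((ε.1 (m+1) : K) - 1) ^ p ^ m‖ ^ (p - 1)) atTop
        (nhds (‖(((t + -1 : TiltSeq p K).1 0 : K))‖ ^ (p - 1))) := hlim.norm.pow (p - 1)
    have hterm : ∀ m : ℕ, (p : ℝ)⁻¹ ≤ ‖((ε.1 (m+1) : K) - 1) ^ p ^ m‖ ^ (p - 1) := by
      intro m
      rw [norm_pow, ← pow_mul]
      apply FontaineAux.cyclo_norm_bound hisom (ε.1 (m+1)).2
      apply FontaineAux.prim_root_of_pow
      · have h1 := FontaineAux.tilt_compat ε 0 (m+1)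
        rw [Nat.zero_add, hε0] at h1
        exact h1
      · have h2 := FontaineAux.tilt_compat ε 1 m
        rw [show 1 + m = m + 1 from by omega] at h2
        rw [h2]
        exact hε1
    have := ge_of_tendsto hlim2 (Filter.Eventually.of_forall hterm)
    rw [show (t - 1 : TiltSeq p K) = t + -1 from sub_eq_add_neg t 1]
    exact this
  -- the key step
  have key : ∀ α : WittVector p (TiltSeq p K), θ α = 0 →
      ∃ c β : WittVector p (TiltSeq p K),
        α = ω * c + β * (p : WittVector p (TiltSeq p K)) ∧ θ β = 0 := by
    intro α hα
    set a := α.coeff 0 with ha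
    have hac : (α - WittVector.teichmuller p a).coeff 0 = 0 := by
      rw [hsub0, WittVector.teichmuller_coeff_zero, sub_self]
    obtain ⟨γ, hγ⟩ := hd0 _ hac
    -- norm bound on a
    have hθp : θ ((p : ℕ) : WittVector p (TiltSeq p K)) = ((p : ℕ) : integerRing K) :=
      map_natCast θ p
    have hθeq : (θ (WittVector.teichmuller p a) : K)
        = -((θ γ : K) * (((p : ℕ) : integerRing K) : K)) := by
      have h1 : θ (α - WittVector.teichmuller p a) = θ γ * ((p : ℕ) : integerRing K) := by
        rw [hγ, map_mul, map_natCast]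
      rw [map_sub, hα, zero_sub] at h1
      have h2 : θ (WittVector.teichmuller p a) = -(θ γ * ((p : ℕ) : integerRing K)) :=
        neg_eq_iff_eq_neg.mp h1
      have h3 : (θ (WittVector.teichmuller p a) : K)
          = ((-(θ γ * ((p : ℕ) : integerRing K)) : integerRing K) : K) :=
        congrArg (fun v : integerRing K => (v : K)) h2
      rw [h3]
      push_cast
      ring
    have hanorm : ‖(a.1 0 : K)‖ ≤ (p : ℝ)⁻¹ := by
      have h3 : (θ (WittVector.teichmuller p a) : K) = (a.1 0 : K) := by rw [hθ]
      rw [← h3, hθeq, norm_neg, norm_mul]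
      have h4 : (((p : ℕ) : integerRing K) : K) = ((p : ℕ) : K) := by push_cast; rfl
      rw [h4, FontaineAux.norm_p_K hisom]
      calc ‖(θ γ : K)‖ * (p:ℝ)⁻¹ ≤ 1 * (p:ℝ)⁻¹ :=
            mul_le_mul_of_nonneg_right (θ γ).2 (by positivity)
        _ = (p:ℝ)⁻¹ := one_mul _
    -- divide in the tilt
    have hw1norm : (p : ℝ)⁻¹ ≤ ‖((((t - 1 : TiltSeq p K) ^ (p - 1)).1 0 : K))‖ := by
      rw [FontaineAux.tilt_pow_coe hone hmul, norm_pow]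
      exact hϖnorm
    have hw1ne : (t - 1 : TiltSeq p K) ^ (p - 1) ≠ 0 := by
      intro hc
      rw [hc, hzero] at hw1norm
      simp only [norm_zero] at hw1norm
      linarith
    obtain ⟨u, hu⟩ := FontaineAux.tilt_dvd hzero hmul a ((t - 1 : TiltSeq p K) ^ (p - 1))
      hw1ne (le_trans hanorm hw1norm)
    have hcoeff : (α - ω * WittVector.teichmuller p u).coeff 0 = 0 := by
      rw [hsub0, ← ha]
      have h5 : (ω * WittVector.teichmuller p u).coeff 0 = (t - 1 : TiltSeq p K) ^ (p - 1) * u := by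
        rw [← FontaineAux.coeff_zero_ringHom_eq, map_mul, FontaineAux.coeff_zero_ringHom_eq,
          FontaineAux.coeff_zero_ringHom_eq, WittVector.teichmuller_coeff_zero, hω0]
      rw [h5, hu, sub_self]
    obtain ⟨β, hβ⟩ := hd0 _ hcoeff
    refine ⟨WittVector.teichmuller p u, β, by rw [← hβ]; ring, ?_⟩
    -- θ β = 0
    have h7 : θ β * ((p : ℕ) : integerRing K) = 0 := by
      have h8 := congrArg θ hβ
      rw [map_sub, hα, map_mul, hθω, zero_mul, zero_sub, neg_zero, map_mul, map_natCast] at h8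
      exact h8.symm
    have hpne : ((p : ℕ) : integerRing K) ≠ 0 := by
      intro hc
      have h11 : ((((p:ℕ) : integerRing K)) : K) = ((0 : integerRing K) : K) :=
        congrArg (fun v : integerRing K => (v : K)) hc
      push_cast at h11
      have h10 : ‖((p:ℕ) : K)‖ = (p:ℝ)⁻¹ := FontaineAux.norm_p_K hisom
      rw [h11] at h10
      simp only [norm_zero] at h10
      linarith
    rcases mul_eq_zero.mp h7 with h | h
    · exact h
    · exact absurd h hpne
  -- conclude: ker θ = span {ω}
  ext α
  rw [RingHom.mem_ker, Ideal.mem_span_singleton]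
  constructor
  · intro hα
    have key2 : ∀ (n : ℕ) (q : WittVector p (TiltSeq p K) × WittVector p (TiltSeq p K)),
        θ q.2 = 0 → α = ω * q.1 + q.2 * (p : WittVector p (TiltSeq p K)) ^ n →
        ∃ q' : WittVector p (TiltSeq p K) × WittVector p (TiltSeq p K),
          θ q'.2 = 0 ∧ α = ω * q'.1 + q'.2 * (p : WittVector p (TiltSeq p K)) ^ (n+1) ∧
          ∃ d, q'.1 = q.1 + d * (p : WittVector p (TiltSeq p K)) ^ n := by
      intro n q hq1 hq2
      obtain ⟨c, β, hcb, hb⟩ := key q.2 hq1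
      refine ⟨(q.1 + c * (p : WittVector p (TiltSeq p K)) ^ n, β), hb, ?_, ⟨c, rfl⟩⟩
      rw [hq2, hcb]
      ring
    choose G hG1 hG2 hG3 using key2
    set F : (n : ℕ) → {q : WittVector p (TiltSeq p K) × WittVector p (TiltSeq p K) //
        θ q.2 = 0 ∧ α = ω * q.1 + q.2 * (p : WittVector p (TiltSeq p K)) ^ n} :=
      fun n => Nat.rec
        (motive := fun n => {q : WittVector p (TiltSeq p K) × WittVector p (TiltSeq p K) //
          θ q.2 = 0 ∧ α = ω * q.1 + q.2 * (p : WittVector p (TiltSeq p K)) ^ n})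
        ⟨(0, α), hα, by simp⟩
        (fun n q => ⟨G n q.1 q.2.1 q.2.2, hG1 n q.1 q.2.1 q.2.2, hG2 n q.1 q.2.1 q.2.2⟩) n
      with hF
    have hcoh : ∀ n, ∃ d, ((F (n+1)).1).1
        = ((F n).1).1 + d * (p : WittVector p (TiltSeq p K)) ^ n :=
      fun n => hG3 n (F n).1 (F n).2.1 (F n).2.2
    have hchain : ∀ n m, n ≤ m → ∀ i < n, (((F m).1).1).coeff i = (((F n).1).1).coeff i := by
      intro n m hnm
      induction m, hnm using Nat.le_induction with
      | base => intro i _; rfl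
      | succ m hm ih =>
        intro i hi
        obtain ⟨d, hd⟩ := hcoh m
        rw [hd]
        have hz : ∀ j < m, (d * (p : WittVector p (TiltSeq p K)) ^ m).coeff j = 0 :=
          (FontaineAux.coeff_eq_zero_iff_dvd m _).mpr ⟨d, rfl⟩
        rw [FontaineAux.coeff_add_of_high _ _ (lt_of_lt_of_le hi hm) hz]
        exact ih i hi
    set cLim : WittVector p (TiltSeq p K) :=
      WittVector.mk p (fun i => (((F (i+1)).1).1).coeff i) with hcL
    have hcLcoeff : ∀ n, ∀ i < n, cLim.coeff i = (((F n).1).1).coeff i := by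
      intro n i hi
      rw [hcL, WittVector.coeff_mk]
      exact (hchain (i+1) n (by omega) i (by omega)).symm
    have hfinal : ∀ N, ∀ i < N, (α - ω * cLim).coeff i = 0 := by
      intro N i hi
      have h2 := FontaineAux.coeff_sub_of_agree cLim (((F N).1).1) (fun j hj => hcLcoeff N j hj)
      obtain ⟨z, hz⟩ := (FontaineAux.coeff_eq_zero_iff_dvd N _).mp h2
      have hFN := (F N).2.2
      have hrepr : α - ω * cLim
          = (((F N).1).2 - ω * z) * (p : WittVector p (TiltSeq p K)) ^ N := by
        calc α - ω * cLim
            = (ω * ((F N).1).1 + ((F N).1).2 * (p : WittVector p (TiltSeq p K)) ^ N)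
              - ω * cLim := by rw [← hFN]
          _ = ((F N).1).2 * (p : WittVector p (TiltSeq p K)) ^ N
              - ω * (cLim - ((F N).1).1) := by ring
          _ = ((F N).1).2 * (p : WittVector p (TiltSeq p K)) ^ N
              - ω * (z * (p : WittVector p (TiltSeq p K)) ^ N) := by rw [hz]
          _ = (((F N).1).2 - ω * z) * (p : WittVector p (TiltSeq p K)) ^ N := by ring
      rw [hrepr]
      exact (FontaineAux.coeff_eq_zero_iff_dvd N _).mpr ⟨_, rfl⟩ i hi
    refine ⟨cLim, ?_⟩
    have hzero' : α - ω * cLim = 0 := by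
      apply WittVector.ext
      intro i
      rw [WittVector.zero_coeff]
      exact hfinal (i+1) i (by omega)
    have := sub_eq_zero.mp hzero'
    exact this
  · rintro ⟨c, rfl⟩
    rw [map_mul, hθω, zero_mul]
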